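/- Let p ≥ 1, m ≥ 1 be integers, n = m + p, λ_0, …, λ_p positive reals and μ_0, …, μ_{p−1} nonnegative reals. Let A be the (p+1)×(p+1) real matrix with rows and columns indexed by 0, …, p whose entries are: A(0,0) = n·λ_0; A(0,j) = −j·μ_{j−1} for 1 ≤ j ≤ p; A(j,j) = λ_j·(n − j) + j·μ_{j−1} for 1 ≤ j ≤ p; A(j, j−1) = −λ_{j−1}·(n − j + 1) for 1 ≤ j ≤ p; and all other entries zero. Then the vector v ∈ ℝ^{p+1} defined by v_x = ((p·μ_{p−1} + λ_p·m)/φ_p)·∏_{j=0, j≠x}^{p−1} Λ_x(j) for 0 ≤ x ≤ p−1 and v_p = (∏_{i=0}^{p−1} λ_i·(m+1+i))/φ_p satisfies A·v = e_0, where e_0 is the standard basis vector with 1 in position 0 and 0 elsewhere. (This is the steady-state linear system A(0)·P = N^{(0)} of the generalized Markov failure model with error rates γ_i = 0, and v gives the Laplace transforms L_{P_{m+p−x}}(0) and L_{P_m}(0) of Theorem 3.1.) -/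

import Mathlib

open Finset

/-- The steady-state linear system `A(0) ⬝ P = N⁽⁰⁾` of the generalized Markov failure
model with error rates `γᵢ = 0`: the vector of Laplace transforms from Theorem 3.1
solves the system. -/
theorem mttdl_linear_system_solution
    (p m : ℕ) (hp : 1 ≤ p) (hm : 1 ≤ m)
    (lam : ℕ → ℝ) (mu : ℕ → ℝ)
    (hlam : ∀ i ≤ p, 0 < lam i) (hmu : ∀ i ≤ p - 1, 0 ≤ mu i)
    (n : ℕ) (hn : n = m + p)
    (Lam : ℕ → ℕ → ℝ)
    (hLam : ∀ x j, Lam x j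
      = lam j * ((n : ℝ) - j) + (if x ≤ j then (j : ℝ) * mu (j - 1) else 0))
    (phi : ℝ) (hphi : phi = ∏ i ∈ Finset.range (p + 1), lam i * ((m : ℝ) + i))
    (A : Matrix (Fin (p + 1)) (Fin (p + 1)) ℝ)
    (hA : ∀ i j : Fin (p + 1), A i j =
      if i.val = 0 ∧ j.val = 0 then (n : ℝ) * lam 0
      else if i.val = 0 then -((j.val : ℝ) * mu (j.val - 1))
      else if j.val = i.val then lam i.val * ((n : ℝ) - i.val) + (i.val : ℝ) * mu (i.val - 1)
      else if j.val + 1 = i.val then -(lam (i.val - 1) * ((n : ℝ) - i.val + 1))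
      else 0)
    (v : Fin (p + 1) → ℝ)
    (hv : ∀ x : Fin (p + 1), v x =
      if x.val = p then (∏ i ∈ Finset.range p, lam i * ((m : ℝ) + 1 + i)) / phi
      else (((p : ℝ) * mu (p - 1) + lam p * m) / phi) *
        ∏ j ∈ (Finset.range p).erase x.val, Lam x.val j) :
    A.mulVec v = Pi.single 0 1 := by
  obtain ⟨q, rfl⟩ : ∃ q, p = q + 1 := ⟨p - 1, by omega⟩
  simp only [Nat.add_sub_cancel] at hmu hv ⊢
  have hnm : (n : ℝ) = (m : ℝ) + q + 1 := by rw [hn]; push_cast; ring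
  have hLamshift : ∀ x j : ℕ, j ≠ x → Lam x j = Lam (x + 1) j := by
    intro x j hj
    rw [hLam, hLam]
    have hc : (x ≤ j) ↔ (x + 1 ≤ j) := by omega
    simp only [hc]
  -- numeric product identities
  have hnum1 : (∏ j ∈ Finset.range (q + 1), ((n : ℝ) - j))
      = ∏ j ∈ Finset.range (q + 1), ((m : ℝ) + 1 + j) := by
    rw [← Finset.prod_range_reflect (fun j => (m : ℝ) + 1 + j) (q + 1)]
    refine Finset.prod_congr rfl fun j hj => ?_
    rw [Finset.mem_range] at hj
    simp only [Nat.add_sub_cancel]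
    rw [hnm, Nat.cast_sub (by omega)]
    ring
  have hnum2 : (∏ j ∈ Finset.range q, ((n : ℝ) - j))
      = ∏ j ∈ Finset.range q, ((m : ℝ) + 2 + j) := by
    rw [← Finset.prod_range_reflect (fun j => (m : ℝ) + 2 + j) q]
    refine Finset.prod_congr rfl fun j hj => ?_
    rw [Finset.mem_range] at hj
    rw [hnm, Nat.cast_sub (by omega : j ≤ q - 1), Nat.cast_sub (by omega : 1 ≤ q), Nat.cast_one]
    ring
  have hGp : (∏ j ∈ Finset.range (q + 1), Lam (q + 1) j)
      = ∏ i ∈ Finset.range (q + 1), lam i * ((m : ℝ) + 1 + i) := by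
    have h1 : (∏ j ∈ Finset.range (q + 1), Lam (q + 1) j)
        = ∏ j ∈ Finset.range (q + 1), lam j * ((n : ℝ) - j) := by
      refine Finset.prod_congr rfl fun j hj => ?_
      rw [Finset.mem_range] at hj
      rw [hLam, if_neg (by omega)]; ring
    rw [h1, Finset.prod_mul_distrib, hnum1, ← Finset.prod_mul_distrib]
  have hG1 : (n : ℝ) * lam 0 * (∏ j ∈ (Finset.range (q + 1)).erase 0, Lam 0 j)
      = ∏ j ∈ Finset.range (q + 1), Lam 1 j := by
    have h0 : (0 : ℕ) ∈ Finset.range (q + 1) := by simp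
    rw [← Finset.mul_prod_erase _ _ h0]
    have h1 : Lam 1 0 = lam 0 * (n : ℝ) := by rw [hLam, if_neg (by omega)]; simp
    rw [h1]
    have h2 : (∏ j ∈ (Finset.range (q + 1)).erase 0, Lam 0 j)
        = ∏ j ∈ (Finset.range (q + 1)).erase 0, Lam 1 j :=
      Finset.prod_congr rfl fun j hj => hLamshift 0 j (by simp at hj; exact hj.1)
    rw [h2]; ring
  have htel : ∀ k : ℕ, k < q →
      ((k + 1 : ℕ) : ℝ) * mu k * (∏ j ∈ (Finset.range (q + 1)).erase (k + 1), Lam (k + 1) j)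
        = (∏ j ∈ Finset.range (q + 1), Lam (k + 1) j)
          - ∏ j ∈ Finset.range (q + 1), Lam (k + 2) j := by
    intro k hk
    have hxmem : k + 1 ∈ Finset.range (q + 1) := by simp; omega
    rw [← Finset.mul_prod_erase _ (Lam (k + 1)) hxmem, ← Finset.mul_prod_erase _ (Lam (k + 2)) hxmem]
    have e1 : Lam (k + 1) (k + 1) = lam (k + 1) * ((n : ℝ) - (k + 1 : ℕ)) + ((k + 1 : ℕ) : ℝ) * mu k := by
      rw [hLam, if_pos le_rfl]; simp only [Nat.add_sub_cancel]
    have e2 : Lam (k + 2) (k + 1) = lam (k + 1) * ((n : ℝ) - (k + 1 : ℕ)) := by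
      rw [hLam, if_neg (by omega)]; ring
    have e3 : (∏ j ∈ (Finset.range (q + 1)).erase (k + 1), Lam (k + 2) j)
        = ∏ j ∈ (Finset.range (q + 1)).erase (k + 1), Lam (k + 1) j := by
      refine Finset.prod_congr rfl fun j hj => ?_
      exact (hLamshift (k + 1) j (by simp at hj; exact hj.1)).symm
    rw [e1, e2, e3]; ring
  have h1 : ∀ x : ℕ, 1 ≤ x → x ≤ q →
      (lam x * ((n : ℝ) - x) + (x : ℝ) * mu (x - 1))
          * (∏ j ∈ (Finset.range (q + 1)).erase x, Lam x j)
        = lam (x - 1) * ((n : ℝ) - x + 1)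
          * ∏ j ∈ (Finset.range (q + 1)).erase (x - 1), Lam (x - 1) j := by
    intro x hx1 hxq
    have hm1 : x - 1 ∈ (Finset.range (q + 1)).erase x := by
      simp [Finset.mem_erase, Finset.mem_range]; omega
    have hm2 : x ∈ (Finset.range (q + 1)).erase (x - 1) := by
      simp [Finset.mem_erase, Finset.mem_range]; omega
    rw [← Finset.mul_prod_erase _ _ hm1, ← Finset.mul_prod_erase _ _ hm2]
    have e1 : Lam x (x - 1) = lam (x - 1) * ((n : ℝ) - x + 1) := by
      rw [hLam, if_neg (by omega)]
      rw [Nat.cast_sub hx1, Nat.cast_one]; ring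
    have e2 : Lam (x - 1) x = lam x * ((n : ℝ) - x) + (x : ℝ) * mu (x - 1) := by
      rw [hLam, if_pos (by omega)]
    have e3 : (∏ j ∈ ((Finset.range (q + 1)).erase x).erase (x - 1), Lam x j)
        = ∏ j ∈ ((Finset.range (q + 1)).erase (x - 1)).erase x, Lam (x - 1) j := by
      rw [Finset.erase_right_comm]
      refine Finset.prod_congr rfl fun j hj => ?_
      simp only [Finset.mem_erase] at hj
      have := hLamshift (x - 1) j (hj.2.1)
      rw [show x - 1 + 1 = x from by omega] at this
      exact this.symm
    rw [e1, e2, e3]; ring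
  have h2 : (∏ i ∈ Finset.range (q + 1), lam i * ((m : ℝ) + 1 + i))
      = lam q * ((n : ℝ) - (q + 1 : ℕ) + 1)
        * ∏ j ∈ (Finset.range (q + 1)).erase q, Lam q j := by
    rw [Finset.range_add_one, Finset.erase_insert Finset.notMem_range_self]
    have e0 : (∏ j ∈ Finset.range q, Lam q j)
        = ∏ j ∈ Finset.range q, lam j * ((n : ℝ) - j) := by
      refine Finset.prod_congr rfl fun j hj => ?_
      rw [Finset.mem_range] at hj
      rw [hLam, if_neg (by omega)]; ring
    rw [e0]
    rw [Finset.prod_insert Finset.notMem_range_self]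
    have e1 : (∏ i ∈ Finset.range q, lam i * ((m : ℝ) + 1 + i))
        = (∏ i ∈ Finset.range q, lam i) * ∏ i ∈ Finset.range q, ((m : ℝ) + 1 + i) := Finset.prod_mul_distrib
    have e2 : (∏ j ∈ Finset.range q, lam j * ((n : ℝ) - j))
        = (∏ i ∈ Finset.range q, lam i) * ∏ i ∈ Finset.range q, ((m : ℝ) + 2 + i) := by
      rw [Finset.prod_mul_distrib, hnum2]
    rw [e1, e2]
    have h1' := Finset.prod_range_succ (fun i => (m : ℝ) + 1 + i) q
    have h2' := Finset.prod_range_succ' (fun i => (m : ℝ) + 1 + i) q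
    have h3' : (∏ i ∈ Finset.range q, ((m : ℝ) + 1 + ↑(i + 1)))
        = ∏ i ∈ Finset.range q, ((m : ℝ) + 2 + ↑i) :=
      Finset.prod_congr rfl fun i _ => by push_cast; ring
    rw [h3'] at h2'
    have eA : (∏ i ∈ Finset.range q, ((m : ℝ) + 1 + ↑i)) * ((m : ℝ) + 1 + ↑q)
        = (∏ i ∈ Finset.range q, ((m : ℝ) + 2 + ↑i)) * ((m : ℝ) + 1) := by
      rw [← h1', h2']
      push_cast; ring
    rw [hnm]
    push_cast
    linear_combination (lam q * ∏ i ∈ Finset.range q, lam i) * eA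
  have hphiW : phi = lam (q + 1) * (m : ℝ) * ∏ i ∈ Finset.range (q + 1), lam i * ((m : ℝ) + 1 + i) := by
    rw [hphi, Finset.prod_mul_distrib, Finset.prod_range_succ lam (q + 1),
      Finset.prod_range_succ' (fun i => (m : ℝ) + i) (q + 1)]
    have e1 : (∏ i ∈ Finset.range (q + 1), ((m : ℝ) + ↑(i + 1)))
        = ∏ i ∈ Finset.range (q + 1), ((m : ℝ) + 1 + ↑i) :=
      Finset.prod_congr rfl fun i _ => by push_cast; ring
    rw [e1, Finset.prod_mul_distrib]
    push_cast
    ring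
  have hphipos : 0 < phi := by
    rw [hphi]
    refine Finset.prod_pos fun i hi => ?_
    rw [Finset.mem_range] at hi
    have h1 : (0:ℝ) < (m : ℝ) + i := by positivity
    exact mul_pos (hlam i (by omega)) h1
  have hne : phi ≠ 0 := ne_of_gt hphipos
  have step : ∀ y : Fin (q + 1 + 1), A.mulVec v y = ∑ k ∈ Finset.range (q + 1 + 1),
      ((if y.val = 0 ∧ k = 0 then (n : ℝ) * lam 0
        else if y.val = 0 then -((k : ℝ) * mu (k - 1))
        else if k = y.val then lam y.val * ((n : ℝ) - y.val) + (y.val : ℝ) * mu (y.val - 1)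
        else if k + 1 = y.val then -(lam (y.val - 1) * ((n : ℝ) - y.val + 1))
        else 0) *
       (if k = q + 1 then (∏ i ∈ Finset.range (q + 1), lam i * ((m : ℝ) + 1 + i)) / phi
        else ((((q + 1 : ℕ) : ℝ) * mu q + lam (q + 1) * m) / phi) *
          ∏ j ∈ (Finset.range (q + 1)).erase k, Lam k j)) := by
    intro y
    rw [← Fin.sum_univ_eq_sum_range]
    simp only [Matrix.mulVec, dotProduct]
    exact Finset.sum_congr rfl fun j _ => by rw [hA, hv]
  funext i
  rw [step i]
  by_cases hi0 : i.val = 0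
  · have hieq : i = 0 := Fin.ext (by simpa using hi0)
    simp only [hi0, eq_self_iff_true, true_and, if_true]
    rw [hieq, Pi.single_eq_same]
    rw [Finset.sum_range_succ', Finset.sum_range_succ]
    simp only [Nat.add_eq_zero, and_false, one_ne_zero, if_false, Nat.add_sub_cancel,
      if_pos rfl, Nat.cast_ofNat]
    simp only [if_true]
    have hterm : ∀ x ∈ Finset.range q,
        (-((↑(x + 1) : ℝ) * mu x) *
          if x + 1 = q + 1 then (∏ i ∈ Finset.range (q + 1), lam i * ((m : ℝ) + 1 + ↑i)) / phi
          else (↑(q + 1) * mu q + lam (q + 1) * ↑m) / phi *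
            ∏ j ∈ (Finset.range (q + 1)).erase (x + 1), Lam (x + 1) j)
        = (fun t => ((↑(q + 1) * mu q + lam (q + 1) * ↑m) / phi) *
            ∏ j ∈ Finset.range (q + 1), Lam (t + 1) j) (x + 1)
          - (fun t => ((↑(q + 1) * mu q + lam (q + 1) * ↑m) / phi) *
            ∏ j ∈ Finset.range (q + 1), Lam (t + 1) j) x := by
      intro x hx
      rw [Finset.mem_range] at hx
      rw [if_neg (by omega)]
      simp only []
      linear_combination (-((↑(q + 1) * mu q + lam (q + 1) * ↑m) / phi)) * htel x hx
    rw [Finset.sum_congr rfl hterm, Finset.sum_range_sub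
      (fun t => ((↑(q + 1) * mu q + lam (q + 1) * ↑m) / phi) *
        ∏ j ∈ Finset.range (q + 1), Lam (t + 1) j)]
    simp only [zero_add]
    rw [hGp]
    rw [if_neg (show ¬ (0 = q + 1) by omega)]
    field_simp
    push_cast
    linear_combination (((q : ℝ) + 1) * mu q + lam (q + 1) * ↑m) * hG1 - hphiW
  · have hine : i ≠ 0 := by
      intro h
      exact hi0 (by simp [h])
    rw [Pi.single_eq_of_ne hine]
    have hi1 : 1 ≤ i.val := Nat.pos_of_ne_zero hi0
    have hi2 : i.val ≤ q + 1 := Nat.lt_succ_iff.mp i.isLt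
    have hsub : ({i.val - 1, i.val} : Finset ℕ) ⊆ Finset.range (q + 1 + 1) := by
      intro k hk
      simp only [Finset.mem_insert, Finset.mem_singleton] at hk
      rw [Finset.mem_range]
      omega
    rw [← Finset.sum_subset hsub]
    · rw [Finset.sum_pair (by omega : i.val - 1 ≠ i.val)]
      rw [if_neg (by omega : ¬ (i.val = 0 ∧ i.val - 1 = 0)), if_neg hi0,
        if_neg (by omega : ¬ (i.val - 1 = i.val)), if_pos (by omega : i.val - 1 + 1 = i.val)]
      rw [if_neg (by omega : ¬ (i.val = 0 ∧ i.val = 0)), if_neg hi0, if_pos rfl]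
      rw [if_neg (by omega : ¬ (i.val - 1 = q + 1))]
      by_cases hip : i.val = q + 1
      · rw [if_pos hip, hip]
        simp only [Nat.add_sub_cancel]
        have h2' := h2
        push_cast at h2' ⊢
        linear_combination (((q : ℝ) + 1) * mu q + lam (q + 1) * ↑m) / phi * h2'
          + ((∏ i ∈ Finset.range (q + 1), lam i * ((m : ℝ) + 1 + ↑i)) * lam (q + 1) / phi) * hnm
      · rw [if_neg hip]
        have hh := h1 i.val hi1 (by omega)
        linear_combination (((↑(q + 1) : ℝ) * mu q + lam (q + 1) * ↑m) / phi) * hh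
    · intro k hk hknot
      rw [Finset.mem_range] at hk
      simp only [Finset.mem_insert, Finset.mem_singleton, not_or] at hknot
      rw [if_neg (by omega : ¬ (i.val = 0 ∧ k = 0)), if_neg hi0,
        if_neg (by omega : ¬ (k = i.val)), if_neg (by omega : ¬ (k + 1 = i.val)), zero_mul]
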